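/- arXiv:2306.10981 — 2 statements merged into one kernel-verified Lean document; each statement's English description precedes it below -/
import Mathlib

section
/- Let G be a group and let x, y ∈ G be commuting elements of finite orders h1 and h2 respectively, and let Ω = |⟨x⟩ ∩ ⟨y⟩|, s = h1/Ω, t = h2/Ω. Then the set ⟨x, y⟩ \ (⟨x⟩ ∪ ⟨y⟩) has exactly (s−1)·(t−1)·Ω elements. -/
/-- Product formula for subgroups in a commutative group. -/
lemma card_sup_mul_card_inf' {L : Type*} [CommGroup L] (A B : Subgroup L) :
    Nat.card ↥(A ⊔ B) * Nat.card ↥(A ⊓ B) = Nat.card ↥A * Nat.card ↥B := by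
  have e1 : Nat.card ↥B * B.relIndex (A ⊔ B) = Nat.card ↥(A ⊔ B) := by
    simpa [Subgroup.relIndex_bot_left] using
      Subgroup.relIndex_mul_relIndex (⊥ : Subgroup L) B (A ⊔ B) bot_le le_sup_right
  have e2 : Nat.card ↥(B ⊓ A) * (B ⊓ A).relIndex A = Nat.card ↥A := by
    simpa [Subgroup.relIndex_bot_left] using
      Subgroup.relIndex_mul_relIndex (⊥ : Subgroup L) (B ⊓ A) A bot_le inf_le_right
  have e3 : B.relIndex (A ⊔ B) = (B ⊓ A).relIndex A := by
    rw [Subgroup.relIndex_sup_right, Subgroup.inf_relIndex_right]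
  calc Nat.card ↥(A ⊔ B) * Nat.card ↥(A ⊓ B)
      = (Nat.card ↥B * (B ⊓ A).relIndex A) * Nat.card ↥(B ⊓ A) := by
        rw [← e1, e3, inf_comm A B]
    _ = Nat.card ↥B * (Nat.card ↥(B ⊓ A) * (B ⊓ A).relIndex A) := by ring
    _ = Nat.card ↥A * Nat.card ↥B := by rw [e2]; ring

/-- Let `x, y` be commuting elements of a group `G` of finite orders `h1` and `h2`, and
let `Ω = |⟨x⟩ ∩ ⟨y⟩|`, `s = h1/Ω`, `t = h2/Ω`. Then the set `⟨x, y⟩ \ (⟨x⟩ ∪ ⟨y⟩)` has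
exactly `(s−1)·(t−1)·Ω` elements. -/
theorem card_closure_sdiff_union (G : Type*) [Group G] (x y : G) (hxy : Commute x y)
    (h1 h2 Ω s t : ℕ)
    (hx : orderOf x = h1) (hy : orderOf y = h2) (hx0 : 0 < h1) (hy0 : 0 < h2)
    (hΩ : Ω = Nat.card ↥(Subgroup.zpowers x ⊓ Subgroup.zpowers y))
    (hs : s = h1 / Ω) (ht : t = h2 / Ω) :
    Nat.card ↥((Subgroup.closure ({x, y} : Set G) : Set G) \
        ((Subgroup.zpowers x : Set G) ∪ (Subgroup.zpowers y : Set G))) =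
      (s - 1) * (t - 1) * Ω := by
  set L : Subgroup G := Subgroup.closure ({x, y} : Set G) with hL
  have hxL : x ∈ L := Subgroup.subset_closure (by simp)
  have hyL : y ∈ L := Subgroup.subset_closure (by simp)
  letI : CommGroup L := Subgroup.closureCommGroupOfComm (k := ({x, y} : Set G))
    (by rintro a (rfl | rfl) b (rfl | rfl)
        · rfl
        · exact hxy
        · exact hxy.symm
        · rfl)
  set x' : L := ⟨x, hxL⟩
  set y' : L := ⟨y, hyL⟩
  set A : Subgroup L := Subgroup.zpowers x' with hA
  set B : Subgroup L := Subgroup.zpowers y' with hB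
  have finj : Function.Injective L.subtype := L.subtype_injective
  have hmapA : A.map L.subtype = Subgroup.zpowers x := by
    rw [hA, MonoidHom.map_zpowers]; rfl
  have hmapB : B.map L.subtype = Subgroup.zpowers y := by
    rw [hB, MonoidHom.map_zpowers]; rfl
  have hclosure : Subgroup.zpowers x ⊔ Subgroup.zpowers y = L := by
    rw [hL, show ({x, y} : Set G) = {x} ∪ {y} from rfl, Subgroup.closure_union,
      Subgroup.zpowers_eq_closure, Subgroup.zpowers_eq_closure]
  have hsup : A ⊔ B = ⊤ := by
    apply Subgroup.map_injective finj
    rw [Subgroup.map_sup, hmapA, hmapB, hclosure, ← MonoidHom.range_eq_map,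
      Subgroup.range_subtype]
  have cardA : Nat.card ↥A = h1 := by
    rw [show h1 = Nat.card ↥(Subgroup.zpowers x) by rw [Nat.card_zpowers, hx], ← hmapA]
    exact Nat.card_congr (Subgroup.equivMapOfInjective A L.subtype finj).toEquiv
  have cardB : Nat.card ↥B = h2 := by
    rw [show h2 = Nat.card ↥(Subgroup.zpowers y) by rw [Nat.card_zpowers, hy], ← hmapB]
    exact Nat.card_congr (Subgroup.equivMapOfInjective B L.subtype finj).toEquiv
  have cardAB : Nat.card ↥(A ⊓ B) = Ω := by
    rw [hΩ, ← hmapA, ← hmapB, ← Subgroup.map_inf _ _ _ finj]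
    exact Nat.card_congr (Subgroup.equivMapOfInjective _ L.subtype finj).toEquiv
  have key : Nat.card L * Ω = h1 * h2 := by
    have := card_sup_mul_card_inf' A B
    rwa [hsup, cardA, cardB, cardAB, Subgroup.card_top] at this
  -- finiteness facts
  have hfinx : (Subgroup.zpowers x : Set G).Finite :=
    finite_zpowers.mpr (by rw [← orderOf_pos_iff, hx]; exact hx0)
  have hfiny : (Subgroup.zpowers y : Set G).Finite :=
    finite_zpowers.mpr (by rw [← orderOf_pos_iff, hy]; exact hy0)
  have hΩpos : 0 < Ω := by
    rw [hΩ]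
    have hf : ((Subgroup.zpowers x ⊓ Subgroup.zpowers y : Subgroup G) : Set G).Finite :=
      hfinx.subset (by rw [Subgroup.coe_inf]; exact Set.inter_subset_left)
    haveI : Finite ↥(Subgroup.zpowers x ⊓ Subgroup.zpowers y) := hf
    exact Nat.card_pos
  have hcardLpos : 0 < Nat.card L := by
    have h12 : 0 < h1 * h2 := Nat.mul_pos hx0 hy0
    rw [← key] at h12
    exact Nat.pos_of_ne_zero fun h => by rw [h, zero_mul] at h12; exact lt_irrefl 0 h12
  haveI : Finite ↥L := Nat.finite_of_card_ne_zero hcardLpos.ne'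
  have hfinL : (L : Set G).Finite := Set.toFinite _
  -- divisibilities
  have hdx : Ω ∣ h1 := by
    rw [hΩ, ← hx, ← Nat.card_zpowers]
    exact Subgroup.card_dvd_of_le inf_le_left
  have hdy : Ω ∣ h2 := by
    rw [hΩ, ← hy, ← Nat.card_zpowers]
    exact Subgroup.card_dvd_of_le inf_le_right
  have hsΩ : s * Ω = h1 := by rw [hs]; exact Nat.div_mul_cancel hdx
  have htΩ : t * Ω = h2 := by rw [ht]; exact Nat.div_mul_cancel hdy
  have cardL : Nat.card L = s * t * Ω := by
    apply Nat.eq_of_mul_eq_mul_right hΩpos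
    rw [key, ← hsΩ, ← htΩ]; ring
  -- subset facts
  have hsubx : (Subgroup.zpowers x : Set G) ⊆ (L : Set G) :=
    SetLike.coe_subset_coe.mpr (Subgroup.zpowers_le.mpr hxL)
  have hsuby : (Subgroup.zpowers y : Set G) ⊆ (L : Set G) :=
    SetLike.coe_subset_coe.mpr (Subgroup.zpowers_le.mpr hyL)
  -- cardinalities of the sets
  have hSn : (L : Set G).ncard = s * t * Ω := by
    rw [← Nat.card_coe_set_eq]; exact cardL
  have hxn : (Subgroup.zpowers x : Set G).ncard = h1 := by
    rw [← Nat.card_coe_set_eq]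
    rw [show Nat.card ↥(Subgroup.zpowers x : Set G) = Nat.card ↥(Subgroup.zpowers x) from rfl,
      Nat.card_zpowers, hx]
  have hyn : (Subgroup.zpowers y : Set G).ncard = h2 := by
    rw [← Nat.card_coe_set_eq]
    rw [show Nat.card ↥(Subgroup.zpowers y : Set G) = Nat.card ↥(Subgroup.zpowers y) from rfl,
      Nat.card_zpowers, hy]
  have hin : ((Subgroup.zpowers x : Set G) ∩ (Subgroup.zpowers y : Set G)).ncard = Ω := by
    rw [show (Subgroup.zpowers x : Set G) ∩ (Subgroup.zpowers y : Set G)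
        = ((Subgroup.zpowers x ⊓ Subgroup.zpowers y : Subgroup G) : Set G) from
      (Subgroup.coe_inf _ _).symm, ← Nat.card_coe_set_eq, hΩ]
    rfl
  have hU : ((Subgroup.zpowers x : Set G) ∪ (Subgroup.zpowers y : Set G)).ncard
      = h1 + h2 - Ω := by
    have := Set.ncard_union_add_ncard_inter (Subgroup.zpowers x : Set G)
      (Subgroup.zpowers y : Set G) hfinx hfiny
    rw [hin, hxn, hyn] at this
    omega
  have hmain : Nat.card ↥((L : Set G) \
      ((Subgroup.zpowers x : Set G) ∪ (Subgroup.zpowers y : Set G)))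
      = s * t * Ω - (h1 + h2 - Ω) := by
    rw [Nat.card_coe_set_eq,
      Set.ncard_diff (Set.union_subset hsubx hsuby) (hfinx.union hfiny), hSn, hU]
  rw [hmain, ← hsΩ, ← htΩ]
  obtain ⟨a, rfl⟩ : ∃ a, s = a + 1 := by
    refine ⟨s - 1, ?_⟩
    have : s ≠ 0 := by rintro rfl; rw [zero_mul] at hsΩ; omega
    omega
  obtain ⟨b, rfl⟩ : ∃ b, t = b + 1 := by
    refine ⟨t - 1, ?_⟩
    have : t ≠ 0 := by rintro rfl; rw [zero_mul] at htΩ; omega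
    omega
  have e1 : (a + 1) * (b + 1) * Ω = a * b * Ω + a * Ω + b * Ω + Ω := by ring
  have e2 : (a + 1) * Ω = a * Ω + Ω := by ring
  have e3 : (b + 1) * Ω = b * Ω + Ω := by ring
  rw [e1, e2, e3]
  simp only [Nat.add_sub_cancel]
  generalize a * b * Ω = u
  generalize a * Ω = v
  generalize b * Ω = w
  omega
end

section
/- Let A be an abelian group and let x, y ∈ A be elements of finite orders h1 and h2 respectively. Let Ω = |⟨x⟩ ∩ ⟨y⟩|, s = h1/Ω and t = h2/Ω. Then there exists an integer c coprime to Ω with x^s = y^{c·t}, and for any such c the group homomorphism Φ : ℤ/h1ℤ × ℤ/h2ℤ → A given by (a, b) ↦ x^a·y^b is well defined, has image ⟨x, y⟩, and its kernel is the cyclic subgroup generated by the class of (s, −c·t), which has order Ω. -/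
open Subgroup

/-- In a group, if `x` has order `h1 > 0` and `H` is a subgroup of `⟨x⟩` of order `Ω`,
then `H = ⟨x^(h1/Ω)⟩`. -/
lemma crater_aux_zpowers_pow {A : Type*} [Group A] {x : A} {h1 : ℕ} (hx : orderOf x = h1)
    (hx0 : 0 < h1) (H : Subgroup A) (hle : H ≤ Subgroup.zpowers x) :
    Subgroup.zpowers (x ^ (h1 / Nat.card H)) = H := by
  classical
  have hfo : IsOfFinOrder x := by rw [← orderOf_pos_iff, hx]; exact hx0
  have hfin : (Subgroup.zpowers x : Set A).Finite := hfo.finite_zpowers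
  haveI : Finite ↥(Subgroup.zpowers x) := hfin.to_subtype
  haveI : Finite ↥H := Finite.of_injective (Set.inclusion hle) (Set.inclusion_injective hle)
  set Ω := Nat.card H with hΩ
  have hΩpos : 0 < Ω := Nat.card_pos
  have hdvd : Ω ∣ h1 := by
    have := Subgroup.card_dvd_of_le hle
    rwa [Nat.card_zpowers, hx] at this
  set s := h1 / Ω with hsdef
  have hsΩ : s * Ω = h1 := Nat.div_mul_cancel hdvd
  have hspos : 0 < s := by
    rcases Nat.eq_zero_or_pos s with h | h
    · rw [h, zero_mul] at hsΩ; omega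
    · exact h
  have hords : orderOf (x ^ s) = Ω := by
    rw [orderOf_pow' x hspos.ne', hx, Nat.gcd_eq_right ⟨Ω, hsΩ.symm⟩, ← hsΩ,
      Nat.mul_div_cancel_left Ω hspos]
  set Z := ↥(Subgroup.zpowers x) with hZ
  haveI : Fintype Z := Fintype.ofFinite Z
  haveI : IsCyclic Z := by
    refine ⟨⟨⟨x, Subgroup.mem_zpowers x⟩, fun z => ?_⟩⟩
    obtain ⟨k, hk⟩ := z.2
    exact ⟨k, Subtype.ext (by rw [SubgroupClass.coe_zpow]; exact hk)⟩
  set H' := H.subgroupOf (Subgroup.zpowers x) with hH'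
  have hcardH' : Nat.card ↥H' = Ω := Nat.card_congr (Subgroup.subgroupOfEquivOfLe hle).toEquiv
  have hsub : ∀ z : Z, z ∈ H' → z ^ Ω = 1 := by
    intro z hz
    have h2 : (⟨z, hz⟩ : ↥H') ^ Ω = 1 := by rw [← hcardH']; exact pow_card_eq_one'
    simpa using congrArg Subtype.val h2
  have hcard_le : (Finset.univ.filter (fun a : Z => a ^ Ω = 1)).card ≤ Ω :=
    IsCyclic.card_pow_eq_one_le hΩpos
  have hsubset : (H' : Set Z).toFinset ⊆ Finset.univ.filter (fun a : Z => a ^ Ω = 1) := by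
    intro z hz
    simp only [Set.mem_toFinset, SetLike.mem_coe] at hz
    simp [Finset.mem_filter, hsub z hz]
  have hcards : Ω ≤ (H' : Set Z).toFinset.card := by
    rw [Set.toFinset_card, ← Nat.card_eq_fintype_card]
    exact le_of_eq hcardH'.symm
  have hset : (H' : Set Z).toFinset = Finset.univ.filter (fun a : Z => a ^ Ω = 1) :=
    Finset.eq_of_subset_of_card_le hsubset (le_trans hcard_le hcards)
  have hxsH : x ^ s ∈ H := by
    have hxpow : (⟨x, Subgroup.mem_zpowers x⟩ : Z) ^ s ∈ H' := by
      have h1' : ((⟨x, Subgroup.mem_zpowers x⟩ : Z) ^ s) ^ Ω = 1 := by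
        rw [← pow_mul, hsΩ]
        apply Subtype.ext
        simp only [SubmonoidClass.coe_pow, OneMemClass.coe_one]
        rw [← hx]; exact pow_orderOf_eq_one x
      have hmf : (⟨x, Subgroup.mem_zpowers x⟩ : Z) ^ s ∈
          Finset.univ.filter (fun a : Z => a ^ Ω = 1) :=
        Finset.mem_filter.mpr ⟨Finset.mem_univ _, h1'⟩
      rw [← hset, Set.mem_toFinset] at hmf
      exact hmf
    have := (Subgroup.mem_subgroupOf).mp hxpow
    simpa using this
  have hle2 : Subgroup.zpowers (x ^ s) ≤ H := Subgroup.zpowers_le.mpr hxsH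
  refine Subgroup.eq_of_le_of_card_ge hle2 ?_
  rw [Nat.card_zpowers, hords]


/-- If `x ^ a = x ^ b` then `a = b` in `ZMod (orderOf x)`. -/
lemma crater_aux_zpow_eq {A : Type*} [Group A] {x : A} {n : ℕ} (hx : orderOf x = n)
    {a b : ℤ} (h : x ^ a = x ^ b) : ((a : ZMod n)) = (b : ZMod n) := by
  have h1 : x ^ (b - a) = 1 := by rw [zpow_sub, h, mul_inv_cancel]
  have h2 : ((orderOf x : ℤ)) ∣ b - a := orderOf_dvd_iff_zpow_eq_one.mpr h1
  rw [hx] at h2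
  exact (ZMod.intCast_eq_intCast_iff _ _ _).mpr (Int.modEq_iff_dvd.mpr h2)

/-- Let `x, y` be elements of an abelian group `A` of finite orders `h1` and `h2`, and let
`Ω = |⟨x⟩ ∩ ⟨y⟩|`, `s = h1/Ω`, `t = h2/Ω`. Then there exists an integer `c` coprime to `Ω`
with `x^s = y^(c·t)`; and for any such `c` the homomorphism
`Φ : ℤ/h1ℤ × ℤ/h2ℤ → A`, `(a, b) ↦ x^a·y^b`, is well defined, has image `⟨x, y⟩`, and its
kernel is the cyclic subgroup generated by the class of `(s, −c·t)`, which has order `Ω`. -/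
theorem crater_parametrization (A : Type*) [CommGroup A] (x y : A) (h1 h2 Ω s t : ℕ)
    (hx : orderOf x = h1) (hy : orderOf y = h2) (hx0 : 0 < h1) (hy0 : 0 < h2)
    (hΩ : Ω = Nat.card ↥(Subgroup.zpowers x ⊓ Subgroup.zpowers y))
    (hs : s = h1 / Ω) (ht : t = h2 / Ω) :
    (∃ c : ℤ, Int.gcd c (Ω : ℤ) = 1 ∧ x ^ (s : ℤ) = y ^ (c * (t : ℤ))) ∧
    ∀ c : ℤ, Int.gcd c (Ω : ℤ) = 1 → x ^ (s : ℤ) = y ^ (c * (t : ℤ)) →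
      ∃ Φ : Multiplicative (ZMod h1 × ZMod h2) →* A,
        (∀ a b : ℤ, Φ (Multiplicative.ofAdd ((a : ZMod h1), (b : ZMod h2))) =
          x ^ a * y ^ b) ∧
        Φ.range = Subgroup.closure ({x, y} : Set A) ∧
        Φ.ker = Subgroup.zpowers
          (Multiplicative.ofAdd (((s : ℤ) : ZMod h1), ((-(c * (t : ℤ)) : ℤ) : ZMod h2))) ∧
        Nat.card ↥Φ.ker = Ω := by
  classical
  set H : Subgroup A := Subgroup.zpowers x ⊓ Subgroup.zpowers y with hH
  have hΩcard : Nat.card ↥H = Ω := hΩ.symm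
  have hfo : IsOfFinOrder x := by rw [← orderOf_pos_iff, hx]; exact hx0
  haveI : Finite ↥(Subgroup.zpowers x) := hfo.finite_zpowers.to_subtype
  haveI : Finite ↥H :=
    Finite.of_injective (Set.inclusion (inf_le_left : H ≤ Subgroup.zpowers x))
      (Set.inclusion_injective _)
  have hΩpos : 0 < Ω := hΩcard ▸ Nat.card_pos
  have hdvd1 : Ω ∣ h1 := by
    have := Subgroup.card_dvd_of_le (inf_le_left : H ≤ Subgroup.zpowers x)
    rwa [hΩcard, Nat.card_zpowers, hx] at this
  have hdvd2 : Ω ∣ h2 := by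
    have := Subgroup.card_dvd_of_le (inf_le_right : H ≤ Subgroup.zpowers y)
    rwa [hΩcard, Nat.card_zpowers, hy] at this
  have hsΩ : s * Ω = h1 := by rw [hs]; exact Nat.div_mul_cancel hdvd1
  have htΩ : t * Ω = h2 := by rw [ht]; exact Nat.div_mul_cancel hdvd2
  have hspos : 0 < s := by
    rcases Nat.eq_zero_or_pos s with h | h
    · rw [h, zero_mul] at hsΩ; omega
    · exact h
  have htpos : 0 < t := by
    rcases Nat.eq_zero_or_pos t with h | h
    · rw [h, zero_mul] at htΩ; omega
    · exact h
  have hxs : Subgroup.zpowers (x ^ s) = H := by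
    rw [hs, ← hΩcard]; exact crater_aux_zpowers_pow hx hx0 H inf_le_left
  have hyt : Subgroup.zpowers (y ^ t) = H := by
    rw [ht, ← hΩcard]; exact crater_aux_zpowers_pow hy hy0 H inf_le_right
  have hordxs : orderOf (x ^ s) = Ω := by
    rw [orderOf_pow' x hspos.ne', hx, Nat.gcd_eq_right ⟨Ω, hsΩ.symm⟩, ← hsΩ,
      Nat.mul_div_cancel_left Ω hspos]
  have hordyt : orderOf (y ^ t) = Ω := by
    rw [orderOf_pow' y htpos.ne', hy, Nat.gcd_eq_right ⟨Ω, htΩ.symm⟩, ← htΩ,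
      Nat.mul_div_cancel_left Ω htpos]
  constructor
  · -- existence of c
    have hxsmem : x ^ s ∈ Subgroup.zpowers (y ^ t) := by
      rw [hyt, ← hxs]; exact Subgroup.mem_zpowers _
    obtain ⟨m, hm⟩ := Subgroup.mem_zpowers_iff.mp hxsmem
    set k : ℕ := (m % (Ω : ℤ)).toNat with hk
    have hΩz : (0:ℤ) < (Ω:ℤ) := by exact_mod_cast hΩpos
    have hkm : ((k : ℕ) : ℤ) = m % (Ω : ℤ) :=
      Int.toNat_of_nonneg (Int.emod_nonneg m hΩz.ne')
    have hyΩ : (y ^ t) ^ (Ω : ℤ) = 1 := by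
      rw [zpow_natCast, ← hordyt]; exact pow_orderOf_eq_one _
    have hmk : (y ^ t) ^ m = (y ^ t) ^ ((k : ℕ) : ℤ) := by
      conv_lhs => rw [← Int.emod_add_mul_ediv m (Ω : ℤ)]
      rw [zpow_add, zpow_mul, hyΩ, one_zpow, mul_one, hkm]
    have hxk : x ^ s = (y ^ t) ^ k := by
      rw [← hm, hmk, zpow_natCast]
    have hgcd : Nat.gcd Ω k = 1 := by
      have h2' : orderOf ((y ^ t) ^ k) = Ω := by rw [← hxk, hordxs]
      rcases Nat.eq_zero_or_pos k with h0 | hkpos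
      · rw [h0, pow_zero, orderOf_one] at h2'
        rw [h0, Nat.gcd_zero_right, ← h2']
      · rw [orderOf_pow' _ hkpos.ne', hordyt] at h2'
        have hd := Nat.gcd_dvd_left Ω k
        have h3 := Nat.div_mul_cancel hd
        rw [h2'] at h3
        have h4 : Ω * Nat.gcd Ω k = Ω * 1 := by rw [h3, mul_one]
        exact Nat.eq_of_mul_eq_mul_left hΩpos h4
    refine ⟨(k : ℤ), ?_, ?_⟩
    · rw [Int.gcd_natCast_natCast, Nat.gcd_comm]; exact hgcd
    · rw [zpow_natCast, hxk, ← zpow_natCast (y ^ t) k, ← zpow_natCast y t, ← zpow_mul,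
        mul_comm]
  · -- the homomorphism
    intro c hc hxc
    haveI : NeZero h1 := ⟨hx0.ne'⟩
    haveI : NeZero h2 := ⟨hy0.ne'⟩
    have hx1 : (zmultiplesHom (Additive A) (Additive.ofMul x)) ((h1 : ℕ) : ℤ) = 0 := by
      simp only [zmultiplesHom_apply, ← ofMul_zpow, zpow_natCast]
      rw [← hx]
      simp [pow_orderOf_eq_one]
    have hy1 : (zmultiplesHom (Additive A) (Additive.ofMul y)) ((h2 : ℕ) : ℤ) = 0 := by
      simp only [zmultiplesHom_apply, ← ofMul_zpow, zpow_natCast]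
      rw [← hy]
      simp [pow_orderOf_eq_one]
    set L1 : ZMod h1 →+ Additive A := ZMod.lift h1 ⟨_, hx1⟩ with hL1
    set L2 : ZMod h2 →+ Additive A := ZMod.lift h2 ⟨_, hy1⟩ with hL2
    set Φ : Multiplicative (ZMod h1 × ZMod h2) →* A := MonoidHom.mk'
      (fun p => (L1 (Multiplicative.toAdd p).1).toMul * (L2 (Multiplicative.toAdd p).2).toMul)
      (fun p q => by
        simp only [toAdd_mul, Prod.fst_add, Prod.snd_add, map_add, toMul_add]
        exact mul_mul_mul_comm _ _ _ _) with hΦdef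
    have hΦ : ∀ a b : ℤ, Φ (Multiplicative.ofAdd ((a : ZMod h1), (b : ZMod h2))) =
        x ^ a * y ^ b := by
      intro a b
      show (L1 _).toMul * (L2 _).toMul = x ^ a * y ^ b
      simp only [toAdd_ofAdd]
      rw [hL1, hL2, ZMod.lift_coe, ZMod.lift_coe]
      simp [zmultiplesHom_apply, toMul_zsmul]
    have hrep : ∀ p : Multiplicative (ZMod h1 × ZMod h2), ∃ a b : ℤ,
        p = Multiplicative.ofAdd ((a : ZMod h1), (b : ZMod h2)) := by
      intro p
      obtain ⟨a, ha⟩ := ZMod.intCast_surjective (Multiplicative.toAdd p).1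
      obtain ⟨b, hb⟩ := ZMod.intCast_surjective (Multiplicative.toAdd p).2
      exact ⟨a, b, by
        apply Multiplicative.toAdd.injective
        rw [toAdd_ofAdd]
        exact Prod.ext ha.symm hb.symm⟩
    have hrange : Φ.range = Subgroup.closure ({x, y} : Set A) := by
      apply le_antisymm
      · rintro z ⟨p, rfl⟩
        obtain ⟨a, b, rfl⟩ := hrep p
        rw [hΦ]
        have hxmem : x ∈ Subgroup.closure ({x, y} : Set A) :=
          Subgroup.subset_closure (by simp)
        have hymem : y ∈ Subgroup.closure ({x, y} : Set A) :=
          Subgroup.subset_closure (by simp)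
        exact mul_mem (zpow_mem hxmem a) (zpow_mem hymem b)
      · rw [Subgroup.closure_le]
        rintro z hz
        simp only [Set.mem_insert_iff, Set.mem_singleton_iff] at hz
        rcases hz with rfl | rfl
        · exact ⟨Multiplicative.ofAdd (((1:ℤ) : ZMod h1), ((0:ℤ) : ZMod h2)), by
            rw [hΦ]; simp⟩
        · exact ⟨Multiplicative.ofAdd (((0:ℤ) : ZMod h1), ((1:ℤ) : ZMod h2)), by
            rw [hΦ]; simp⟩
    set g : Multiplicative (ZMod h1 × ZMod h2) :=
      Multiplicative.ofAdd (((s : ℤ) : ZMod h1), ((-(c * (t : ℤ)) : ℤ) : ZMod h2)) with hg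
    have hΦg : Φ g = 1 := by
      rw [hg, hΦ, hxc, ← zpow_add]
      simp
    have hker : Φ.ker = Subgroup.zpowers g := by
      apply le_antisymm
      · intro p hp
        obtain ⟨a, b, rfl⟩ := hrep p
        rw [MonoidHom.mem_ker, hΦ] at hp
        have hxa : x ^ (a : ℤ) ∈ Subgroup.zpowers (x ^ s) := by
          rw [hxs]
          rw [Subgroup.mem_inf]
          refine ⟨(Subgroup.zpowers x).zpow_mem (Subgroup.mem_zpowers x) a, ?_⟩
          have hb : x ^ (a : ℤ) = (y ^ (b : ℤ))⁻¹ := by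
            rw [eq_inv_iff_mul_eq_one]; exact hp
          rw [hb]
          exact (Subgroup.zpowers y).inv_mem ((Subgroup.zpowers y).zpow_mem (Subgroup.mem_zpowers y) b)
        obtain ⟨m, hm⟩ := Subgroup.mem_zpowers_iff.mp hxa
        have hm1 : x ^ (m * (s : ℤ)) = x ^ (a : ℤ) := by
          rw [mul_comm, zpow_mul, zpow_natCast]
          exact hm
        have e1 : ((m * (s : ℤ) : ℤ) : ZMod h1) = ((a : ℤ) : ZMod h1) :=
          crater_aux_zpow_eq hx hm1
        have hm2 : y ^ (m * (-(c * (t : ℤ)))) = y ^ (b : ℤ) := by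
          have hxa2 : x ^ (m * (s : ℤ)) = (y ^ (c * (t : ℤ))) ^ m := by
            rw [mul_comm, zpow_mul, hxc]
          have hb : y ^ (b : ℤ) = (x ^ (a : ℤ))⁻¹ := by
            rw [eq_inv_iff_mul_eq_one, mul_comm]; exact hp
          rw [hb, ← hm1, hxa2, ← zpow_mul, ← zpow_neg]
          congr 1
          ring
        have e2 : ((m * (-(c * (t : ℤ))) : ℤ) : ZMod h2) = ((b : ℤ) : ZMod h2) :=
          crater_aux_zpow_eq hy hm2
        refine ⟨m, ?_⟩
        apply Multiplicative.toAdd.injective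
        rw [toAdd_zpow, hg, toAdd_ofAdd, toAdd_ofAdd]
        apply Prod.ext
        · show m • ((s : ℤ) : ZMod h1) = ((a : ℤ) : ZMod h1)
          rw [zsmul_eq_mul, ← Int.cast_mul]
          exact e1
        · show m • ((-(c * (t : ℤ)) : ℤ) : ZMod h2) = ((b : ℤ) : ZMod h2)
          rw [zsmul_eq_mul, ← Int.cast_mul]
          exact e2
      · exact Subgroup.zpowers_le.mpr (MonoidHom.mem_ker.mpr hΦg)
    have hordg : orderOf g = Ω := by
      rw [hg, orderOf_ofAdd_eq_addOrderOf]
      have hfst : addOrderOf ((s : ℤ) : ZMod h1) = Ω := by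
        rw [Int.cast_natCast, ZMod.addOrderOf_coe s hx0.ne',
          Nat.gcd_eq_right ⟨Ω, hsΩ.symm⟩, ← hsΩ, Nat.mul_div_cancel_left Ω hspos]
      apply Nat.dvd_antisymm
      · apply addOrderOf_dvd_of_nsmul_eq_zero
        apply Prod.ext
        · show Ω • ((s : ℤ) : ZMod h1) = 0
          rw [nsmul_eq_mul, Int.cast_natCast, ← Nat.cast_mul, mul_comm Ω s, hsΩ,
            ZMod.natCast_self]
        · show Ω • ((-(c * (t : ℤ)) : ℤ) : ZMod h2) = 0
          rw [nsmul_eq_mul, ← Int.cast_natCast (R := ZMod h2), ← Int.cast_mul]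
          rw [ZMod.intCast_zmod_eq_zero_iff_dvd]
          refine ⟨-c, ?_⟩
          have : ((t : ℤ) * (Ω : ℤ)) = (h2 : ℤ) := by exact_mod_cast htΩ
          rw [← this]; ring
      · have := Prod.addOrderOf (((s : ℤ) : ZMod h1), ((-(c * (t : ℤ)) : ℤ) : ZMod h2))
        rw [this]
        exact hfst ▸ Nat.dvd_lcm_left _ _
    have hcard : Nat.card ↥Φ.ker = Ω := by
      rw [hker, Nat.card_zpowers, hordg]
    exact ⟨Φ, hΦ, hrange, hker, hcard⟩
end
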